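/- In the concrete quasi-free CAR model with λ : ℤ → ℝ, 0 < λ_l < 1: let L = {l₁ < ... < l_p} be a finite subset of ℤ. Then there exists a function c assigning to each L₁ ⊆ L a nonzero real number c(L₁) such that for all finite subsets I = {i₁ < ... < i_n} and J = {j₁ < ... < j_m} of ℤ with I, J, L pairwise disjoint, there exist signs σ(I,L₁,J) ∈ {+1,−1} with (a_{i₁}∘⋯∘a_{i_n})∘(a_{l₁}∘⋯∘a_{l_p})∘(a_{l_p}*∘⋯∘a_{l₁}*)∘(a_{j_m}*∘⋯∘a_{j₁}*) Ω = Σ_{L₁ ⊆ L} σ(I,L₁,J)·(∏_{i ∈ I} √(1−λ_i))·(∏_{j ∈ J} √(λ_j))·c(L₁)·e_{(I∪L₁, L₁∪J)}. In particular every coefficient in this expansion over the basis vectors e_{(I∪L₁, L₁∪J)}, L₁ ⊆ L, is a nonzero real number. -/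

import Mathlib

/- The concrete quasi-free CAR model: `H = ℓ²(Finset ℤ × Finset ℤ)` with orthonormal basis
`e (A, B)`, vacuum `Ω = e (∅, ∅)`, and operators `a l`, `b l`, `G` given on the basis by the
quasi-free formulas with symbol `λ` (diagonal, `R h_l = λ_l h_l`). -/

noncomputable section

/-- The GNS Hilbert space: `ℓ²` over pairs of finite subsets of `ℤ`. -/
abbrev CARSpace := lp (fun _ : Finset ℤ × Finset ℤ => ℂ) 2

/-- The orthonormal basis vector `e_{(A,B)}`. -/
def carE (p : Finset ℤ × Finset ℤ) : CARSpace := lp.single 2 p 1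

/-- The vacuum vector `Ω = e_{(∅,∅)}`. -/
def carΩ : CARSpace := carE (∅, ∅)

/-- `n(l, X)` = number of elements of `X` strictly below `l`. -/
def nlt (l : ℤ) (X : Finset ℤ) : ℕ := (X.filter fun j => j < l).card

/-- `a` is the family of quasi-free annihilation-type operators `a_l = π_R(a(h_l))`:
`a_l e_{(A,B)} = √(1−λ_l)·(−1)^{|B|}·(−1)^{n(l,A)}·[l ∉ A]·e_{(A∪{l},B)}
              + √(λ_l)·(−1)^{n(l,B)}·[l ∈ B]·e_{(A,B∖{l})}`. -/
def IsCAR_a (lam : ℤ → ℝ) (a : ℤ → CARSpace →L[ℂ] CARSpace) : Prop :=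
  ∀ (l : ℤ) (A B : Finset ℤ),
    a l (carE (A, B)) =
      ((Real.sqrt (1 - lam l) : ℂ) * (-1) ^ B.card * (-1) ^ nlt l A *
          (if l ∈ A then 0 else 1)) • carE (insert l A, B) +
      ((Real.sqrt (lam l) : ℂ) * (-1) ^ nlt l B *
          (if l ∈ B then 1 else 0)) • carE (A, B.erase l)

/-- `b` is the family of commutant quasi-free operators:
`b_l e_{(A,B)} = √(λ_l)·(−1)^{|B|}·(−1)^{n(l,A)}·[l ∉ A]·e_{(A∪{l},B)}
              − √(1−λ_l)·(−1)^{n(l,B)}·[l ∈ B]·e_{(A,B∖{l})}`. -/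
def IsCAR_b (lam : ℤ → ℝ) (b : ℤ → CARSpace →L[ℂ] CARSpace) : Prop :=
  ∀ (l : ℤ) (A B : Finset ℤ),
    b l (carE (A, B)) =
      ((Real.sqrt (lam l) : ℂ) * (-1) ^ B.card * (-1) ^ nlt l A *
          (if l ∈ A then 0 else 1)) • carE (insert l A, B) -
      ((Real.sqrt (1 - lam l) : ℂ) * (-1) ^ nlt l B *
          (if l ∈ B then 1 else 0)) • carE (A, B.erase l)

/-- `G = Γ⊗Γ` : `G e_{(A,B)} = (−1)^{|A|+|B|} e_{(A,B)}`. -/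
def IsCAR_G (G : CARSpace →L[ℂ] CARSpace) : Prop :=
  ∀ (A B : Finset ℤ), G (carE (A, B)) = ((-1 : ℂ) ^ (A.card + B.card)) • carE (A, B)

lemma carE_apply (p q : Finset ℤ × Finset ℤ) : (carE p) q = if q = p then 1 else 0 := by
  rcases eq_or_ne q p with h | h
  · subst h; simp [carE, lp.single_apply_self]
  · simp [carE, lp.single_apply_ne _ _ _ h, h]

lemma inner_carE (p : Finset ℤ × Finset ℤ) (f : CARSpace) :
    (inner ℂ (carE p) f : ℂ) = f p := by
  rw [carE, lp.inner_single_left]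
  simp [RCLike.inner_apply]

lemma inner_carE_carE (p q : Finset ℤ × Finset ℤ) :
    (inner ℂ (carE p) (carE q) : ℂ) = if p = q then 1 else 0 := by
  rw [inner_carE, carE_apply]

lemma nlt_insert_self (l : ℤ) (B : Finset ℤ) : nlt l (insert l B) = nlt l B := by
  unfold nlt
  rw [Finset.filter_insert, if_neg (lt_irrefl l)]

lemma star_a_vac {lam : ℤ → ℝ} {a : ℤ → CARSpace →L[ℂ] CARSpace} (ha : IsCAR_a lam a)
    (l : ℤ) (B : Finset ℤ) (hl : l ∉ B) :
    (star (a l)) (carE (∅, B)) =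
      ((Real.sqrt (lam l) * (-1 : ℝ) ^ nlt l B : ℝ) : ℂ) • carE (∅, insert l B) := by
  apply lp.ext
  funext q
  obtain ⟨C, D⟩ := q
  have h1 : ((star (a l)) (carE (∅, B))) (C, D)
      = (inner ℂ (carE (C, D)) ((star (a l)) (carE (∅, B))) : ℂ) := (inner_carE _ _).symm
  have h2 : ((((Real.sqrt (lam l) * (-1 : ℝ) ^ nlt l B : ℝ) : ℂ)) • carE (∅, insert l B)) (C, D)
      = ((Real.sqrt (lam l) * (-1 : ℝ) ^ nlt l B : ℝ) : ℂ)
          * (if ((C : Finset ℤ), D) = (∅, insert l B) then 1 else 0) := by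
    rw [lp.coeFn_smul, Pi.smul_apply, carE_apply, smul_eq_mul]
  rw [h1, h2, ContinuousLinearMap.star_eq_adjoint, ContinuousLinearMap.adjoint_inner_right,
    ha l C D, inner_add_left, inner_smul_left, inner_smul_left, inner_carE_carE,
    inner_carE_carE]
  have hins : ((insert l C : Finset ℤ), D) ≠ ((∅ : Finset ℤ), B) := fun h =>
    Finset.insert_ne_empty l C (Prod.ext_iff.mp h).1
  rw [if_neg hins, mul_zero, zero_add]
  by_cases hc : ((C : Finset ℤ), D.erase l) = ((∅ : Finset ℤ), B)
  · obtain ⟨hC, hD⟩ := Prod.ext_iff.mp hc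
    dsimp only at hC hD
    by_cases hlD : l ∈ D
    · have hDeq : D = insert l B := by rw [← hD, Finset.insert_erase hlD]
      subst hC; subst hDeq
      rw [if_pos hc, if_pos rfl, nlt_insert_self]
      simp [Complex.conj_ofReal, Finset.mem_insert_self]
    · have hDeq : D = B := by rw [← hD, Finset.erase_eq_of_notMem hlD]
      have hne : ¬ (((C : Finset ℤ), D) = ((∅ : Finset ℤ), insert l B)) := by
        intro hh
        have h2' : D = insert l B := (Prod.ext_iff.mp hh).2
        exact hlD (by rw [h2']; exact Finset.mem_insert_self l B)
      rw [if_pos hc, if_neg hne]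
      simp [hlD]
  · rw [if_neg hc, mul_zero, if_neg (by
      intro h
      obtain ⟨hC, hD⟩ := Prod.ext_iff.mp h
      dsimp only at hC hD
      exact hc (by rw [hC, hD, Finset.erase_insert hl]))]
    rw [mul_zero]

lemma a_apply_nn {lam : ℤ → ℝ} {a : ℤ → CARSpace →L[ℂ] CARSpace} (ha : IsCAR_a lam a)
    (l : ℤ) (A B : Finset ℤ) (hA : l ∉ A) (hB : l ∉ B) :
    a l (carE (A, B)) =
      ((Real.sqrt (1 - lam l) * (-1 : ℝ) ^ B.card * (-1 : ℝ) ^ nlt l A : ℝ) : ℂ) •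
        carE (insert l A, B) := by
  rw [ha l A B, if_neg hA, if_neg hB]
  push_cast
  simp

lemma a_apply_nm {lam : ℤ → ℝ} {a : ℤ → CARSpace →L[ℂ] CARSpace} (ha : IsCAR_a lam a)
    (l : ℤ) (A B : Finset ℤ) (hA : l ∉ A) (hB : l ∈ B) :
    a l (carE (A, B)) =
      ((Real.sqrt (1 - lam l) * (-1 : ℝ) ^ B.card * (-1 : ℝ) ^ nlt l A : ℝ) : ℂ) •
        carE (insert l A, B) +
      ((Real.sqrt (lam l) * (-1 : ℝ) ^ nlt l B : ℝ) : ℂ) • carE (A, B.erase l) := by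
  rw [ha l A B, if_neg hA, if_pos hB]
  push_cast
  simp

lemma starPhase {lam : ℤ → ℝ} {a : ℤ → CARSpace →L[ℂ] CARSpace} (ha : IsCAR_a lam a) :
    ∀ (ls : List ℤ) (B : Finset ℤ), ls.Nodup → (∀ x ∈ ls, x ∉ B) →
    ∃ r : ℝ, |r| = (∏ x ∈ ls.toFinset, Real.sqrt (lam x)) ∧
      ((ls.map fun l => star (a l)).prod) (carE (∅, B)) = (r : ℂ) • carE (∅, B ∪ ls.toFinset)
  | [], B, _, _ => ⟨1, by simp, by simp⟩
  | x :: t, B, hnd, hB => by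
    obtain ⟨hxt, hndt⟩ := List.nodup_cons.mp hnd
    obtain ⟨r, hr, heq⟩ := starPhase ha t B hndt (fun y hy => hB y (List.mem_cons_of_mem _ hy))
    have hxTf : x ∉ t.toFinset := fun h => hxt (List.mem_toFinset.mp h)
    have hx : x ∉ B ∪ t.toFinset := by
      simp only [Finset.mem_union, not_or]
      exact ⟨hB x (List.mem_cons_self), hxTf⟩
    refine ⟨r * (Real.sqrt (lam x) * (-1 : ℝ) ^ nlt x (B ∪ t.toFinset)), ?_, ?_⟩
    · rw [abs_mul, hr, abs_mul, abs_pow, abs_neg, abs_one, one_pow, mul_one,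
        abs_of_nonneg (Real.sqrt_nonneg _), List.toFinset_cons,
        Finset.prod_insert hxTf]
      ring
    · rw [List.map_cons, List.prod_cons, ContinuousLinearMap.mul_apply, heq, map_smul,
        star_a_vac ha x _ hx, smul_smul]
      rw [List.toFinset_cons, Finset.union_insert]
      congr 1
      push_cast
      ring

lemma aPhase {lam : ℤ → ℝ} {a : ℤ → CARSpace →L[ℂ] CARSpace} (ha : IsCAR_a lam a) :
    ∀ (ls : List ℤ) (A B : Finset ℤ), ls.Nodup → (∀ x ∈ ls, x ∉ A) →
    ∃ r : Finset ℤ → ℝ,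
      (∀ E ∈ (ls.toFinset ∩ B).powerset,
        |r E| = (∏ y ∈ ls.toFinset \ E, Real.sqrt (1 - lam y)) * ∏ y ∈ E, Real.sqrt (lam y)) ∧
      ((ls.map a).prod) (carE (A, B)) =
        ∑ E ∈ (ls.toFinset ∩ B).powerset, (r E : ℂ) • carE (A ∪ (ls.toFinset \ E), B \ E)
  | [], A, B, _, _ => by
    refine ⟨fun _ => 1, ?_, ?_⟩
    · intro E hE
      simp only [List.toFinset_nil, Finset.empty_inter, Finset.powerset_empty,
        Finset.mem_singleton] at hE
      subst hE
      simp
    · simp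
  | x :: t, A, B, hnd, hA => by
    obtain ⟨hxt, hndt⟩ := List.nodup_cons.mp hnd
    obtain ⟨r, hnorm, heq⟩ := aPhase ha t A B hndt (fun y hy => hA y (List.mem_cons_of_mem _ hy))
    have hxA : x ∉ A := hA x (List.mem_cons_self)
    have hxTf : x ∉ t.toFinset := fun h => hxt (List.mem_toFinset.mp h)
    have hxK : x ∉ t.toFinset ∩ B := fun h => hxTf (Finset.mem_inter.mp h).1
    refine ⟨fun E => if x ∈ E then
        r (E.erase x) * (Real.sqrt (lam x) * (-1 : ℝ) ^ nlt x (B \ E.erase x))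
      else
        r E * (Real.sqrt (1 - lam x) * (-1 : ℝ) ^ (B \ E).card *
          (-1 : ℝ) ^ nlt x (A ∪ (t.toFinset \ E))), ?_, ?_⟩
    · -- norm goal
      intro E' hE'
      dsimp only
      rw [Finset.mem_powerset] at hE'
      rw [List.toFinset_cons] at hE' ⊢
      by_cases hxE : x ∈ E'
      · rw [if_pos hxE]
        have hEK : E'.erase x ∈ (t.toFinset ∩ B).powerset := by
          rw [Finset.mem_powerset]
          intro y hy
          obtain ⟨hyx, hyE⟩ := Finset.mem_erase.mp hy
          have := hE' hyE
          rw [Finset.mem_inter, Finset.mem_insert] at this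
          exact Finset.mem_inter.mpr ⟨(this.1).resolve_left hyx, this.2⟩
        have hsd : insert x t.toFinset \ E' = t.toFinset \ E'.erase x := by
          ext y
          simp only [Finset.mem_sdiff, Finset.mem_insert, Finset.mem_erase]
          constructor
          · rintro ⟨hy1 | hy1, hy2⟩
            · exact absurd hxE (hy1 ▸ hy2)
            · exact ⟨hy1, fun hc => hy2 hc.2⟩
          · rintro ⟨hy1, hy2⟩
            refine ⟨Or.inr hy1, fun hyE => ?_⟩
            exact hy2 ⟨fun hyx => hxTf (hyx ▸ hy1), hyE⟩
        rw [abs_mul, hnorm _ hEK, abs_mul, abs_pow, abs_neg, abs_one, one_pow, mul_one,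
          abs_of_nonneg (Real.sqrt_nonneg _), hsd,
          ← Finset.mul_prod_erase E' _ hxE]
        ring
      · rw [if_neg hxE]
        have hEK : E' ∈ (t.toFinset ∩ B).powerset := by
          rw [Finset.mem_powerset]
          intro y hy
          have := hE' hy
          rw [Finset.mem_inter, Finset.mem_insert] at this
          exact Finset.mem_inter.mpr
            ⟨(this.1).resolve_left (fun h => hxE (h ▸ hy)), this.2⟩
        have hsd : insert x t.toFinset \ E' = insert x (t.toFinset \ E') :=
          Finset.insert_sdiff_of_notMem _ hxE
        have hxsd : x ∉ t.toFinset \ E' := fun h => hxTf (Finset.mem_sdiff.mp h).1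
        rw [abs_mul, hnorm _ hEK, hsd, Finset.prod_insert hxsd]
        simp only [abs_mul, abs_pow, abs_neg, abs_one, one_pow, mul_one,
          abs_of_nonneg (Real.sqrt_nonneg _)]
        ring
    · -- equation goal
      rw [List.map_cons, List.prod_cons, ContinuousLinearMap.mul_apply, heq, map_sum,
        List.toFinset_cons]
      by_cases hxB : x ∈ B
      · rw [Finset.insert_inter_of_mem hxB, Finset.powerset_insert, Finset.sum_union (by
          rw [Finset.disjoint_left]
          intro s hs hs'
          obtain ⟨u, hu, rfl⟩ := Finset.mem_image.mp hs'
          exact hxK (Finset.mem_powerset.mp hs (Finset.mem_insert_self x u))),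
          Finset.sum_image (by
            intro E₁ h₁ E₂ h₂ hins
            have h1 : x ∉ E₁ := fun h => hxK (Finset.mem_powerset.mp h₁ h)
            have h2 : x ∉ E₂ := fun h => hxK (Finset.mem_powerset.mp h₂ h)
            rw [← Finset.erase_insert h1, hins, Finset.erase_insert h2])]
        rw [← Finset.sum_add_distrib]
        refine Finset.sum_congr rfl ?_
        intro E hE
        dsimp only
        rw [Finset.mem_powerset] at hE
        have hxE : x ∉ E := fun h => hxK (hE h)
        have hET : E ⊆ t.toFinset := fun y hy => (Finset.mem_inter.mp (hE hy)).1
        have hxAE : x ∉ A ∪ (t.toFinset \ E) := by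
          simp only [Finset.mem_union, Finset.mem_sdiff, not_or]
          exact ⟨hxA, fun h => hxTf h.1⟩
        have hxBE : x ∈ B \ E := Finset.mem_sdiff.mpr ⟨hxB, hxE⟩
        rw [map_smul, a_apply_nm ha x _ _ hxAE hxBE, smul_add, smul_smul, smul_smul]
        congr 1
        · rw [if_neg hxE]
          have hs1 : insert x (A ∪ (t.toFinset \ E)) = A ∪ (insert x t.toFinset \ E) := by
            rw [Finset.insert_sdiff_of_notMem _ hxE, Finset.union_insert]
          rw [hs1]
          congr 1
          push_cast
          ring
        · rw [if_pos (Finset.mem_insert_self x E), Finset.erase_insert hxE]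
          have hs2 : insert x t.toFinset \ insert x E = t.toFinset \ E := by
            rw [Finset.insert_sdiff_insert, Finset.sdiff_insert,
              Finset.erase_eq_of_notMem (fun h => hxTf (Finset.mem_sdiff.mp h).1)]
          have hs3 : B \ insert x E = (B \ E).erase x := Finset.sdiff_insert B E x
          rw [hs2, hs3]
          congr 1
          push_cast
          ring
      · rw [Finset.insert_inter_of_notMem hxB]
        refine Finset.sum_congr rfl ?_
        intro E hE
        dsimp only
        rw [Finset.mem_powerset] at hE
        have hxE : x ∉ E := fun h => hxK (hE h)
        have hxAE : x ∉ A ∪ (t.toFinset \ E) := by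
          simp only [Finset.mem_union, Finset.mem_sdiff, not_or]
          exact ⟨hxA, fun h => hxTf h.1⟩
        have hxBE : x ∉ B \ E := fun h => hxB (Finset.mem_sdiff.mp h).1
        rw [map_smul, a_apply_nn ha x _ _ hxAE hxBE, smul_smul, if_neg hxE]
        have hs1 : insert x (A ∪ (t.toFinset \ E)) = A ∪ (insert x t.toFinset \ E) := by
          rw [Finset.insert_sdiff_of_notMem _ hxE, Finset.union_insert]
        rw [hs1]
        congr 1
        push_cast
        ring
/-- let `L = {l₁ < ... < l_p}` be a finite subset of `ℤ`. Then there is a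
function `c` assigning to each `L₁ ⊆ L` a nonzero real `c(L₁)` such that for all finite
`I = {i₁ < ... < i_n}`, `J = {j₁ < ... < j_m}` with `I, J, L` pairwise disjoint there are
signs `σ(I,L₁,J) ∈ {±1}` with
`(a_{i₁}∘⋯∘a_{i_n})∘(a_{l₁}∘⋯∘a_{l_p})∘(a_{l_p}*∘⋯∘a_{l₁}*)∘(a_{j_m}*∘⋯∘a_{j₁}*) Ω
  = Σ_{L₁ ⊆ L} σ·(∏_{i∈I}√(1−λ_i))·(∏_{j∈J}√(λ_j))·c(L₁)·e_{(I∪L₁, L₁∪J)}`. -/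
theorem stmt11 (lam : ℤ → ℝ) (hlam : ∀ l, 0 < lam l ∧ lam l < 1)
    (a : ℤ → CARSpace →L[ℂ] CARSpace) (ha : IsCAR_a lam a)
    (L : Finset ℤ) :
    ∃ c : Finset ℤ → ℝ, (∀ L₁ ⊆ L, c L₁ ≠ 0) ∧
      ∀ I J : Finset ℤ, Disjoint I J → Disjoint I L → Disjoint L J →
        ∃ σ : Finset ℤ → ℝ, (∀ L₁ ⊆ L, σ L₁ = 1 ∨ σ L₁ = -1) ∧
          (((I.sort (· ≤ ·)).map a).prod *
              ((L.sort (· ≤ ·)).map a).prod *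
              ((L.sort (· ≤ ·)).reverse.map fun l => star (a l)).prod *
              ((J.sort (· ≤ ·)).reverse.map fun l => star (a l)).prod) carΩ =
            ∑ L₁ ∈ L.powerset,
              ((σ L₁ * (∏ i ∈ I, Real.sqrt (1 - lam i)) *
                  (∏ j ∈ J, Real.sqrt (lam j)) * c L₁ : ℝ) : ℂ) •
                carE (I ∪ L₁, L₁ ∪ J) := by
  have hsq1 : ∀ l, 0 < Real.sqrt (lam l) := fun l => Real.sqrt_pos.mpr (hlam l).1
  have hsq2 : ∀ l, 0 < Real.sqrt (1 - lam l) :=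
    fun l => Real.sqrt_pos.mpr (by linarith [(hlam l).2])
  set c : Finset ℤ → ℝ := fun L₁ => (∏ l ∈ L, Real.sqrt (lam l)) *
      (∏ l ∈ L₁, Real.sqrt (1 - lam l)) * ∏ l ∈ L \ L₁, Real.sqrt (lam l) with hc
  have hcpos : ∀ L₁, 0 < c L₁ := fun L₁ =>
    mul_pos (mul_pos (Finset.prod_pos fun l _ => hsq1 l) (Finset.prod_pos fun l _ => hsq2 l))
      (Finset.prod_pos fun l _ => hsq1 l)
  refine ⟨c, fun L₁ _ => ne_of_gt (hcpos L₁), ?_⟩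
  intro I J hIJ hIL hLJ
  -- the star phase
  set ls₁ : List ℤ := (L.sort (· ≤ ·)).reverse ++ (J.sort (· ≤ ·)).reverse with hls₁
  have hnd₁ : ls₁.Nodup := by
    refine List.Nodup.append (List.nodup_reverse.mpr (L.sort_nodup _))
      (List.nodup_reverse.mpr (J.sort_nodup _)) ?_
    intro y hy hy'
    rw [List.mem_reverse, Finset.mem_sort] at hy hy'
    exact Finset.disjoint_left.mp hLJ hy hy'
  have htf₁ : ls₁.toFinset = L ∪ J := by
    rw [hls₁, List.toFinset_append, List.toFinset_reverse, List.toFinset_reverse,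
      Finset.sort_toFinset, Finset.sort_toFinset]
  obtain ⟨r₀, hr₀, heq₀⟩ := starPhase ha ls₁ ∅ hnd₁ (fun y _ => Finset.notMem_empty y)
  rw [htf₁] at heq₀ hr₀
  rw [Finset.empty_union] at heq₀
  -- the a phase
  set ls₂ : List ℤ := I.sort (· ≤ ·) ++ L.sort (· ≤ ·) with hls₂
  have hnd₂ : ls₂.Nodup := by
    refine List.Nodup.append (I.sort_nodup _) (L.sort_nodup _) ?_
    intro y hy hy'
    rw [Finset.mem_sort] at hy hy'
    exact Finset.disjoint_left.mp hIL hy hy'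
  have htf₂ : ls₂.toFinset = I ∪ L := by
    rw [hls₂, List.toFinset_append, Finset.sort_toFinset, Finset.sort_toFinset]
  obtain ⟨r, hnorm, heq₂⟩ := aPhase ha ls₂ ∅ (L ∪ J) hnd₂ (fun y _ => Finset.notMem_empty y)
  have hKL : (I ∪ L) ∩ (L ∪ J) = L := by
    ext y
    simp only [Finset.mem_inter, Finset.mem_union]
    constructor
    · rintro ⟨hy1 | hy1, hy2 | hy2⟩
      · exact absurd hy2 (Finset.disjoint_left.mp hIL hy1)
      · exact absurd hy2 (Finset.disjoint_left.mp hIJ hy1)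
      · exact hy1
      · exact hy1
    · intro hy
      exact ⟨Or.inr hy, Or.inl hy⟩
  rw [htf₂, hKL] at heq₂ hnorm
  -- assemble
  refine ⟨fun L₁ => if 0 < r₀ * r (L \ L₁) then (1 : ℝ) else -1, ?_, ?_⟩
  · intro L₁ _
    dsimp only
    split_ifs
    · exact Or.inl rfl
    · exact Or.inr rfl
  · have habs : ∀ L₁ ⊆ L, |r₀ * r (L \ L₁)| =
        (∏ i ∈ I, Real.sqrt (1 - lam i)) * (∏ j ∈ J, Real.sqrt (lam j)) * c L₁ := by
      intro L₁ hL₁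
      have hmem : L \ L₁ ∈ L.powerset := Finset.mem_powerset.mpr (Finset.sdiff_subset)
      have hs1 : (I ∪ L) \ (L \ L₁) = I ∪ L₁ := by
        rw [Finset.union_sdiff_distrib, Finset.sdiff_eq_self_of_disjoint
          (Finset.disjoint_of_subset_right Finset.sdiff_subset hIL),
          Finset.sdiff_sdiff_self_left, Finset.inter_eq_right.mpr hL₁]
      rw [abs_mul, hr₀, hnorm _ hmem, hs1, Finset.prod_union hLJ,
        Finset.prod_union (Finset.disjoint_of_subset_right hL₁ hIL), hc]
      ring
    have hP12 : ((I.sort (· ≤ ·)).map a).prod * ((L.sort (· ≤ ·)).map a).prod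
        = (ls₂.map a).prod := by
      rw [hls₂, List.map_append, List.prod_append]
    have hP34 : ((L.sort (· ≤ ·)).reverse.map fun l => star (a l)).prod *
        ((J.sort (· ≤ ·)).reverse.map fun l => star (a l)).prod
        = (ls₁.map fun l => star (a l)).prod := by
      rw [hls₁, List.map_append, List.prod_append]
    rw [mul_assoc ((((I.sort (· ≤ ·)).map a).prod * ((L.sort (· ≤ ·)).map a).prod)),
      ContinuousLinearMap.mul_apply, hP12, hP34]
    show (ls₂.map a).prod ((ls₁.map fun l => star (a l)).prod (carE (∅, ∅))) = _
    rw [heq₀, map_smul, heq₂, Finset.smul_sum]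
    rw [Finset.sum_nbij' (i := fun E => L \ E) (j := fun E => L \ E)
      (hi := fun E hE => Finset.mem_powerset.mpr Finset.sdiff_subset)
      (hj := fun E hE => Finset.mem_powerset.mpr Finset.sdiff_subset)
      (left_neg := ?_) (right_neg := ?_) (h := ?_)]
    · intro E hE
      rw [Finset.mem_powerset] at hE
      rw [Finset.sdiff_sdiff_self_left, Finset.inter_eq_right.mpr hE]
    · intro E hE
      rw [Finset.mem_powerset] at hE
      rw [Finset.sdiff_sdiff_self_left, Finset.inter_eq_right.mpr hE]
    · intro E hE
      dsimp only
      rw [Finset.mem_powerset] at hE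
      have hs0 : ∅ ∪ ((I ∪ L) \ E) = I ∪ (L \ E) := by
        rw [Finset.empty_union, Finset.union_sdiff_distrib,
          Finset.sdiff_eq_self_of_disjoint (Finset.disjoint_of_subset_right hE hIL)]
      have hs2 : (L ∪ J) \ E = (L \ E) ∪ J := by
        rw [Finset.union_sdiff_distrib, Finset.sdiff_eq_self_of_disjoint
          (Finset.disjoint_of_subset_right hE hLJ.symm)]
      have hLL : L \ (L \ E) = E := by
        rw [Finset.sdiff_sdiff_self_left, Finset.inter_eq_right.mpr hE]
      rw [smul_smul, hs0, hs2, hLL]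
      have hab := habs (L \ E) Finset.sdiff_subset
      rw [hc] at hab
      dsimp only at hab
      rw [hLL] at hab
      rw [hc]
      dsimp only
      rw [hLL]
      congr 1
      rcases lt_or_ge 0 (r₀ * r E) with h | h
      · rw [abs_of_pos h] at hab
        rw [if_pos h]
        have hab' := congrArg (fun x : ℝ => (x : ℂ)) hab
        push_cast at hab'
        push_cast
        linear_combination hab'
      · rw [abs_of_nonpos h] at hab
        rw [if_neg (not_lt.mpr h)]
        have hab' := congrArg (fun x : ℝ => (x : ℂ)) hab
        push_cast at hab'
        push_cast
        linear_combination -hab'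

end
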